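/- Let A be a Banach algebra with a left approximate identity and φ a non-zero multiplicative linear functional on A. If A is left φ-biflat, then the bidual A** (equipped with the first Arens product) is left φ̃-biflat. -/

import Mathlib

/-!
We realize the bidual `(B ⊗_p B)**` of the projective tensor product of a Banach algebra `B`
with itself canonically as the dual of the Banach space `B →L[ℂ] B* ` of bounded bilinear
forms on `B` (the latter being isometrically isomorphic to `(B ⊗_p B)*`).  All the canonical
Banach `B`-bimodule actions are spelled out explicitly through this identification.
The multiplication of the Banach algebra `B` is encoded as a bounded bilinear map
`μ : B →L[ℂ] B →L[ℂ] B` (for a Banach algebra `A`, `μ = ContinuousLinearMap.mul ℂ A`).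
-/

noncomputable section

/-- The topological dual of a normed space (removed from Mathlib; restored with its old meaning). -/
abbrev NormedSpace.Dual (𝕜 : Type*) [NontriviallyNormedField 𝕜] (E : Type*)
    [SeminormedAddCommGroup E] [NormedSpace 𝕜 E] : Type _ :=
  E →L[𝕜] 𝕜

open ContinuousLinearMap NormedSpace

/-- Shortcut instances for spaces of bounded `ℂ`-linear maps (needed for nested spaces of operators). -/
instance instSeminormedAddCommGroupCLMComplex {E F : Type*} [SeminormedAddCommGroup E] [NormedSpace ℂ E]
    [SeminormedAddCommGroup F] [NormedSpace ℂ F] : SeminormedAddCommGroup (E →L[ℂ] F) :=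
  inferInstance

instance instNormedSpaceCLMComplex {E F : Type*} [SeminormedAddCommGroup E] [NormedSpace ℂ E]
    [SeminormedAddCommGroup F] [NormedSpace ℂ F] : NormedSpace ℂ (E →L[ℂ] F) :=
  inferInstance


/-- The space of bounded bilinear forms on `B`, canonically the dual of the projective
tensor product `B ⊗_p B`. -/
abbrev BilForm (B : Type*) [NormedAddCommGroup B] [NormedSpace ℂ B] : Type _ :=
  B →L[ℂ] Dual ℂ B

/-- The bidual of the projective tensor product `B ⊗_p B`, realized canonically as the dual of
the Banach space of bounded bilinear forms on `B`. -/
abbrev TensorBidual (B : Type*) [NormedAddCommGroup B] [NormedSpace ℂ B] : Type _ :=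
  Dual ℂ (BilForm B)

/-- The bidual `B**` of a normed space `B`. -/
abbrev Bidual (B : Type*) [NormedAddCommGroup B] [NormedSpace ℂ B] : Type _ :=
  Dual ℂ (Dual ℂ B)

variable {B : Type*} [NormedAddCommGroup B] [NormedSpace ℂ B]

/-- The left action of `a ∈ B` (with multiplication `μ`) on `(B ⊗_p B)**`:
`(a • T) β = T ((x, y) ↦ β (a x, y))`, the canonical bidual extension of the
`B`-bimodule action `a • (x ⊗ y) = (a x) ⊗ y` on `B ⊗_p B`. -/
def tensorLSmul (μ : B →L[ℂ] B →L[ℂ] B) (a : B) (T : TensorBidual B) : TensorBidual B :=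
  T.comp ((compL ℂ B B (Dual ℂ B)).flip (μ a))

/-- The right action of `a ∈ B` on `(B ⊗_p B)**`:
`(T • a) β = T ((x, y) ↦ β (x, y a))`, the canonical bidual extension of the
`B`-bimodule action `(x ⊗ y) • a = x ⊗ (y a)` on `B ⊗_p B`. -/
def tensorRSmul (μ : B →L[ℂ] B →L[ℂ] B) (T : TensorBidual B) (a : B) : TensorBidual B :=
  T.comp (compL ℂ B (Dual ℂ B) (Dual ℂ B) ((compL ℂ B B ℂ).flip (μ.flip a)))

/-- `π_B^* ψ`, the image of a functional `ψ ∈ B*` under the adjoint of the product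
morphism `π_B : B ⊗_p B → B`; as a bilinear form it is `(x, y) ↦ ψ (x y)`.  Thus
`π_B** T ψ = T (piDual μ ψ)` for `T ∈ (B ⊗_p B)**`. -/
def piDual (μ : B →L[ℂ] B →L[ℂ] B) (ψ : Dual ℂ B) : BilForm B :=
  (compL ℂ B B ℂ ψ).comp μ

/-- The left action of `a ∈ B` on the bidual `B**`: `(a • m) f = m (f ∘ (a * ·))`. -/
def bidualLSmul (μ : B →L[ℂ] B →L[ℂ] B) (a : B) (m : Bidual B) : Bidual B :=
  m.comp ((compL ℂ B B ℂ).flip (μ a))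

/-- A Banach algebra `B` (with multiplication `μ` and a multiplicative functional `ψ`) is
*left `ψ`-biflat* if there is a bounded linear map `ρ : B → (B ⊗_p B)**` with
`ρ (a b) = ψ (b) ρ (a) = a • ρ (b)` for all `a, b ∈ B`, and `ψ̃ ∘ π_B** ∘ ρ = ψ`
(note `(ψ̃ ∘ π_B**) T = T (piDual μ ψ)`). -/
def IsLeftBiflat (μ : B →L[ℂ] B →L[ℂ] B) (ψ : Dual ℂ B) : Prop :=
  ∃ ρ : B →L[ℂ] TensorBidual B,
    (∀ a b : B, ρ (μ a b) = ψ b • ρ a ∧ ρ (μ a b) = tensorLSmul μ a (ρ b)) ∧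
    ∀ a : B, ρ a (piDual μ ψ) = ψ a

/-- A Banach algebra `B` is *left `ψ`-amenable* if there is `m ∈ B**` with
`a • m = ψ (a) m` for all `a ∈ B` and `ψ̃ (m) = m (ψ) = 1`. -/
def IsLeftAmenable (μ : B →L[ℂ] B →L[ℂ] B) (ψ : Dual ℂ B) : Prop :=
  ∃ m : Bidual B, (∀ (a : B) (f : Dual ℂ B), m (f.comp (μ a)) = ψ a * m f) ∧ m ψ = 1

/-- Auxiliary map for the first Arens product: `arensAux μ f a = f · a`, where
`(f · a) (b) = f (a b)`. -/
def arensAux (μ : B →L[ℂ] B →L[ℂ] B) : Dual ℂ B →L[ℂ] (B →L[ℂ] Dual ℂ B) :=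
  ((compL ℂ B (B →L[ℂ] B) (Dual ℂ B)).flip μ).comp (compL ℂ B B ℂ)

/-- Second auxiliary map for the first Arens product: `arensAux₂ μ n f = n · f`, where
`(n · f) (a) = n (f · a)`. -/
def arensAux₂ (μ : B →L[ℂ] B →L[ℂ] B) : Bidual B →L[ℂ] (Dual ℂ B →L[ℂ] Dual ℂ B) :=
  ((compL ℂ (Dual ℂ B) (B →L[ℂ] Dual ℂ B) (Dual ℂ B)).flip (arensAux μ)).comp
    (compL ℂ B (Dual ℂ B) ℂ)

/-- The *first Arens product* on the bidual `B**` of a Banach algebra `B` with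
multiplication `μ`: `(m □ n) (f) = m (n · f)`, where `(n · f) (a) = n (f · a)` and
`(f · a) (b) = f (a b)`. -/
def arens (μ : B →L[ℂ] B →L[ℂ] B) : Bidual B →L[ℂ] Bidual B →L[ℂ] Bidual B :=
  ((compL ℂ (Bidual B) (Dual ℂ B →L[ℂ] Dual ℂ B) (Bidual B)).flip (arensAux₂ μ)).comp
    (compL ℂ (Dual ℂ B) (Dual ℂ B) ℂ)

/-- `ψ̃`, the canonical extension of a functional `ψ ∈ B*` to a functional on `B**`
(given by `ψ̃ (m) = m (ψ)`); if `ψ` is a character of `B`, this is the unique extension of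
`ψ` to a character of `B**` with the first Arens product. -/
def charExt (ψ : Dual ℂ B) : Dual ℂ (Bidual B) :=
  ContinuousLinearMap.apply ℂ ℂ ψ

variable {A : Type*} [NonUnitalNormedRing A] [NormedSpace ℂ A]
  [IsScalarTower ℂ A A] [SMulCommClass ℂ A A] [CompleteSpace A]

set_option maxHeartbeats 2000000 in
/-- half of Theorem 2.2: if a Banach algebra `A` has a left approximate
identity (a net `(e_α)` with `e_α a → a` in norm for every `a ∈ A`, encoded by a filter)
and `A` is left `φ`-biflat, then the bidual `A**`, equipped with the first Arens product,
is left `φ̃`-biflat. -/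
theorem bidual_left_phi_biflat_of_left_phi_biflat
    (φ : A →L[ℂ] ℂ) (hφ_ne : φ ≠ 0)
    (hφ_mul : ∀ a b : A, φ (a * b) = φ a * φ b)
    (hlai : ∃ l : Filter A, l.NeBot ∧ ∀ a : A, Filter.Tendsto (fun e => e * a) l (nhds a))
    (hbf : IsLeftBiflat (ContinuousLinearMap.mul ℂ A) φ) :
    IsLeftBiflat (B := Bidual A) (arens (ContinuousLinearMap.mul ℂ A)) (charExt φ) := by
  classical
  obtain ⟨l, hl, hlai⟩ := hlai
  obtain ⟨ρ, hρ, hρπ⟩ := hbf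
  set μ := ContinuousLinearMap.mul ℂ A with hμ
  -- a vector with φ a₀ = 1
  obtain ⟨c, hc⟩ : ∃ c, φ c ≠ 0 := by
    by_contra h
    push_neg at h
    exact hφ_ne (by ext x; simpa using h x)
  set a₀ := (φ c)⁻¹ • c with ha₀
  have hφa₀ : φ a₀ = 1 := by
    simp [ha₀, inv_mul_cancel₀ hc]
  set E := ρ a₀ with hE
  have hμab : ∀ a b : A, μ a b = a * b := fun a b => rfl
  -- ρ a = φ a • E for every a
  have key : ∀ a : A, ρ a = φ a • E := by
    intro a
    have h1 : Filter.Tendsto (fun e => ρ (e * a)) l (nhds (ρ a)) :=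
      (ρ.continuous.tendsto a).comp (hlai a)
    have h2 : ∀ e : A, ρ (e * a) = φ a • ρ e := by
      intro e; have := (hρ e a).1; rwa [hμab] at this
    have h3 : Filter.Tendsto (fun e => ρ (e * a₀)) l (nhds E) :=
      (ρ.continuous.tendsto a₀).comp (hlai a₀)
    have h4 : Filter.Tendsto (fun e : A => ρ e) l (nhds E) := by
      have : ∀ e : A, ρ (e * a₀) = ρ e := by
        intro e; have := (hρ e a₀).1; rw [hμab] at this; rw [this, hφa₀, one_smul]
      exact h3.congr this
    have h5 : Filter.Tendsto (fun e : A => φ a • ρ e) l (nhds (φ a • E)) :=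
      h4.const_smul (φ a)
    have h6 : Filter.Tendsto (fun e => ρ (e * a)) l (nhds (φ a • E)) :=
      h5.congr fun e => (h2 e).symm
    exact tendsto_nhds_unique h1 h6
  have hE1 : E (piDual μ φ) = 1 := by
    have := hρπ a₀; rw [hφa₀] at this; exact this
  have hEsm : ∀ a : A, tensorLSmul μ a E = φ a • E := by
    intro a
    have h1 := (hρ a a₀).2
    have h2 := (hρ a a₀).1
    rw [h2, hφa₀, one_smul, key a] at h1
    exact h1.symm
  -- the functional m₀ ∈ A**
  set m₀ : Bidual A := E.comp (arensAux μ) with hm₀def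
  have hpa : ∀ f : Dual ℂ A, arensAux μ f = piDual μ f := fun f => rfl
  have hm₀app : ∀ f : Dual ℂ A, m₀ f = E (piDual μ f) := fun f => rfl
  have hm₀φ : m₀ φ = 1 := hE1
  have hm₀ : ∀ (a : A) (f : Dual ℂ A), m₀ (f.comp (μ a)) = φ a * m₀ f := by
    intro a f
    have h1 : piDual μ (f.comp (μ a)) = (piDual μ f).comp (μ a) := by
      ext x y
      show f (μ a (μ x y)) = f (μ (μ a x) y)
      rw [hμab, hμab, hμab, hμab, mul_assoc]
    have h2 : E ((piDual μ f).comp (μ a)) = tensorLSmul μ a E (piDual μ f) := rfl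
    rw [hm₀app, h1, h2, hEsm a]
    simp [hm₀app]
  -- character extension facts
  set ψ := charExt φ with hψdef
  have hψapp : ∀ m : Bidual A, ψ m = m φ := fun m => rfl
  have haux₂ : ∀ (n : Bidual A) (f : Dual ℂ A) (x : A),
      arensAux₂ μ n f x = n (f.comp (μ x)) := fun n f x => rfl
  have harens : ∀ (m n : Bidual A) (f : Dual ℂ A),
      arens μ m n f = m (arensAux₂ μ n f) := fun m n f => rfl
  have hφcomp : ∀ x : A, φ.comp (μ x) = φ x • φ := by
    intro x; ext y
    show φ (μ x y) = φ x • φ y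
    rw [hμab, hφ_mul]; rfl
  have hmul : ∀ m n : Bidual A, ψ (arens μ m n) = ψ m * ψ n := by
    intro m n
    have h1 : arensAux₂ μ n φ = n φ • φ := by
      ext x; rw [haux₂, hφcomp]
      simp [mul_comm]
    rw [hψapp, harens, h1]
    simp [hψapp, mul_comm]
  have hνm₀ : ∀ m : Bidual A, arens μ m m₀ = m φ • m₀ := by
    intro m
    ext f
    have h1 : arensAux₂ μ m₀ f = m₀ f • φ := by
      ext x; rw [haux₂, hm₀]
      simp [mul_comm]
    rw [harens, h1]
    simp [mul_comm]
  -- the diagonal D and the splitting ρB for A**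
  set D : TensorBidual (Bidual A) :=
    (ContinuousLinearMap.apply ℂ ℂ m₀).comp
      (ContinuousLinearMap.apply ℂ (Dual ℂ (Bidual A)) m₀) with hDdef
  have hDapp : ∀ β : BilForm (Bidual A), D β = β m₀ m₀ := fun β => rfl
  have hψm₀ : ψ m₀ = 1 := hm₀φ
  set ν := arens μ with hνdef
  have htls : ∀ (a : Bidual A) (T : TensorBidual (Bidual A)) (β : BilForm (Bidual A)),
      tensorLSmul ν a T β = T (β.comp (ν a)) := fun a T β => rfl
  have hDsm : ∀ a : Bidual A, tensorLSmul ν a D = ψ a • D := by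
    intro a
    ext β
    rw [htls, hDapp]
    show β (ν a m₀) m₀ = (ψ a • D) β
    rw [hνdef, hνm₀ a]
    simp [hDapp, hψapp]
  refine ⟨ψ.smulRight D, fun a b => ⟨?_, ?_⟩, fun m => ?_⟩
  · simp only [ContinuousLinearMap.smulRight_apply]
    rw [hmul a b, mul_comm, mul_smul]
  · have h1 : tensorLSmul ν a (ψ b • D) = ψ b • tensorLSmul ν a D := by
      ext β
      rw [htls]
      simp [htls]
    simp only [ContinuousLinearMap.smulRight_apply]
    rw [hmul a b, h1, hDsm a, mul_smul, smul_comm]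
  · simp only [ContinuousLinearMap.smulRight_apply, ContinuousLinearMap.smul_apply]
    have h1 : D (piDual ν ψ) = ψ (ν m₀ m₀) := rfl
    rw [h1, hνm₀ m₀, hm₀φ, one_smul, hψm₀, smul_eq_mul, mul_one]
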